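/- Let n ≥ 3 and let ρ^{(1)},…,ρ^{(n−1)} be bipartite density matrices, with the n-partite pair-entangled-network state τ = ⊗_{i=1}^{n−1} ρ^{(i)}_{A_iB_i} on the star graph with center party A = A₁⋯A_{n−1} and leaf parties B₁,…,B_{n−1}. If ρ^{(1)} is nonsteerable from B₁ to A₁, then every conditional probability distribution P(a b₁…b_{n−1} | x y₁…y_{n−1}) obtained by applying local POVMs to τ (one POVM family for A and one for each B_i) is of the form P = ∑_λ q(λ) P₁(b₁|y₁,λ) P₂(a b₂…b_{n−1} | x y₂…y_{n−1}, λ) with q(λ) ≥ 0 summing to 1 and P₂ nonsignalling; in particular, τ is not genuinely multipartite nonlocal. -/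

import Mathlib

open scoped BigOperators ComplexOrder

noncomputable section

/-- Projector onto the `d`-dimensional maximally entangled state
`|φ⁺_d⟩ = (1/√d) ∑ᵢ |ii⟩`, as a matrix on `ℂ^d ⊗ ℂ^d`. -/
def phiPlus (d : ℕ) : Matrix (Fin d × Fin d) (Fin d × Fin d) ℂ :=
  fun x y => if x.1 = x.2 ∧ y.1 = y.2 then (1 / (d : ℂ)) else 0

/-- The `d`-dimensional isotropic state with visibility `p`:
`ρ(p) = p φ⁺_d + (1-p) 𝟙/d²`. -/
def iso (d : ℕ) (p : ℝ) : Matrix (Fin d × Fin d) (Fin d × Fin d) ℂ :=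
  (p : ℂ) • phiPlus d +
    (((1 - p) / (d : ℝ) ^ 2 : ℝ) : ℂ) • (1 : Matrix (Fin d × Fin d) (Fin d × Fin d) ℂ)

/-- The (possibly unnormalized) projector `|ψ⟩⟨ψ|` onto a vector `ψ`. -/
def vecProj {ι : Type} (ψ : ι → ℂ) : Matrix ι ι ℂ :=
  fun i j => ψ i * (starRingEnd ℂ) (ψ j)

section Nonlocality

variable {ι : Type} [Fintype ι] [DecidableEq ι]

/-- A (conditional) probability distribution: outputs `a i`, inputs `x i` for each
party `i`. -/
def IsDist {A X : ι → Type} [∀ i, Fintype (A i)]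
    (P : ((i : ι) → A i) → ((i : ι) → X i) → ℝ) : Prop :=
  (∀ a x, 0 ≤ P a x) ∧ ∀ x, ∑ a, P a x = 1

/-- The marginal distribution of the outputs of the parties in `S`. -/
def marginal {A X : ι → Type} [∀ i, Fintype (A i)] [∀ i, DecidableEq (A i)]
    (P : ((i : ι) → A i) → ((i : ι) → X i) → ℝ)
    (S : Finset ι) (aS : (i : {i // i ∈ S}) → A i.1) (x : (i : ι) → X i) : ℝ :=
  ∑ b : {b : (i : ι) → A i // ∀ i : {i // i ∈ S}, b i.1 = aS i}, P b.1 x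

/-- A conditional distribution is nonsignalling if, for every subset `S` of parties,
the marginal of the outputs of the parties in `S` does not depend on the inputs of the
parties outside `S`. -/
def NonSignalling {A X : ι → Type} [∀ i, Fintype (A i)] [∀ i, DecidableEq (A i)]
    (P : ((i : ι) → A i) → ((i : ι) → X i) → ℝ) : Prop :=
  ∀ (S : Finset ι) (aS : (i : {i // i ∈ S}) → A i.1) (x x' : (i : ι) → X i),
    (∀ i ∈ S, x i = x' i) → marginal P S aS x = marginal P S aS x'

/-- A multipartite conditional distribution is bilocal if it is a convex combination,
over nonempty proper subsets `M` of the parties and hidden variables `λ`, of products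
of nonsignalling conditional distributions for the parties in `M` and in `Mᶜ`. -/
def Bilocal {A X : ι → Type} [∀ i, Fintype (A i)] [∀ i, DecidableEq (A i)]
    (P : ((i : ι) → A i) → ((i : ι) → X i) → ℝ) : Prop :=
  ∃ (Λ : Type) (_ : Fintype Λ) (q : Finset ι → Λ → ℝ)
    (P₁ : (M : Finset ι) → Λ →
      (((i : {i // i ∈ M}) → A i.1) → ((i : {i // i ∈ M}) → X i.1) → ℝ))
    (P₂ : (M : Finset ι) → Λ →
      (((i : {i // i ∉ M}) → A i.1) → ((i : {i // i ∉ M}) → X i.1) → ℝ)),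
    (∀ M l, 0 ≤ q M l) ∧ (∑ M, ∑ l, q M l) = 1 ∧
    (∀ M l, q M l ≠ 0 →
      M.Nonempty ∧ M ≠ Finset.univ ∧
      IsDist (P₁ M l) ∧ IsDist (P₂ M l) ∧
      NonSignalling (P₁ M l) ∧ NonSignalling (P₂ M l)) ∧
    ∀ a x, P a x =
      ∑ M, ∑ l, q M l * P₁ M l (fun i => a i.1) (fun i => x i.1) *
        P₂ M l (fun i => a i.1) (fun i => x i.1)

/-- The tensor product `⊗ᵢ F i` of one-party operators, as a matrix on the
multipartite space. -/
def prodOp {H : ι → Type} (F : (i : ι) → Matrix (H i) (H i) ℂ) :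
    Matrix ((i : ι) → H i) ((i : ι) → H i) ℂ :=
  fun u v => ∏ i, F i (u i) (v i)

/-- The outcome distribution produced by applying local POVMs
`E i (x i) (a i)` (input `x i`, outcome `a i` for party `i`) to the multipartite
state `ρ`. -/
def born {H : ι → Type} [∀ i, Fintype (H i)] [∀ i, DecidableEq (H i)]
    {A X : ι → Type}
    (ρ : Matrix ((i : ι) → H i) ((i : ι) → H i) ℂ)
    (E : (i : ι) → X i → A i → Matrix (H i) (H i) ℂ)
    (a : (i : ι) → A i) (x : (i : ι) → X i) : ℝ :=
  (Matrix.trace (ρ * prodOp (fun i => E i (x i) (a i)))).re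

/-- The operators `E x a` (for each input `x`) form POVMs: positive semidefinite and
summing to the identity. -/
def IsPOVMFamily {H : Type} [Fintype H] [DecidableEq H] {A X : Type} [Fintype A]
    (E : X → A → Matrix H H ℂ) : Prop :=
  ∀ x, (∀ a, (E x a).PosSemidef) ∧ (∑ a, E x a) = 1

/-- A multipartite state is genuinely multipartite nonlocal (GMNL) if some local POVMs
produce from it an outcome distribution which is not bilocal. -/
def IsGMNL {H : ι → Type} [∀ i, Fintype (H i)] [∀ i, DecidableEq (H i)]
    (ρ : Matrix ((i : ι) → H i) ((i : ι) → H i) ℂ) : Prop :=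
  ∃ (X A : ι → Type) (instX : ∀ i, Fintype (X i)) (instA : ∀ i, Fintype (A i))
    (instA' : ∀ i, DecidableEq (A i))
    (E : (i : ι) → X i → A i → Matrix (H i) (H i) ℂ),
    (∀ i, @IsPOVMFamily (H i) _ _ (A i) (X i) (instA i) (E i)) ∧
    ¬ @Bilocal ι _ _ A X instA instA' (born ρ E)

end Nonlocality

/-- Local Hilbert-space basis for a star network with `m` leaves and arbitrary edge
dimensions: the central party (`none`) holds the `A`-qudit of every edge, and leaf
party `some j` holds the `B`-qudit of edge `j`. -/
def starH2 {m : ℕ} (dA dB : Fin m → ℕ) : Option (Fin m) → Type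
  | none => (j : Fin m) → Fin (dA j)
  | some j => Fin (dB j)

instance starH2.fintype {m : ℕ} (dA dB : Fin m → ℕ) : ∀ i, Fintype (starH2 dA dB i)
  | none => inferInstanceAs (Fintype ((j : Fin m) → Fin (dA j)))
  | some j => inferInstanceAs (Fintype (Fin (dB j)))

instance starH2.decEq {m : ℕ} (dA dB : Fin m → ℕ) : ∀ i, DecidableEq (starH2 dA dB i)
  | none => inferInstanceAs (DecidableEq ((j : Fin m) → Fin (dA j)))
  | some j => inferInstanceAs (DecidableEq (Fin (dB j)))

/-- The star PEN state `⊗ⱼ ρ⁽ʲ⁾_{AⱼBⱼ}`: the central party shares the bipartite state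
`ρ j` with leaf party `j`, for every `j`. -/
def starState {m : ℕ} (dA dB : Fin m → ℕ)
    (ρ : (j : Fin m) → Matrix (Fin (dA j) × Fin (dB j)) (Fin (dA j) × Fin (dB j)) ℂ) :
    Matrix ((i : Option (Fin m)) → starH2 dA dB i)
           ((i : Option (Fin m)) → starH2 dA dB i) ℂ :=
  fun u v => ∏ j : Fin m, ρ j (u none j, u (some j)) (v none j, v (some j))

/-- The steered (unnormalized) state `tr_B((𝟙_A ⊗ F) ρ_{AB})` on `A`, for an operator
`F` on `B`. -/
def steered {da db : ℕ} (ρ : Matrix (Fin da × Fin db) (Fin da × Fin db) ℂ)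
    (F : Matrix (Fin db) (Fin db) ℂ) : Matrix (Fin da) (Fin da) ℂ :=
  fun a1 a2 => ∑ b1, ∑ b2, F b1 b2 * ρ (a1, b2) (a2, b1)

/-- A bipartite state `ρ_{AB}` is nonsteerable from `B` to `A` if every finite family of
POVMs on `B` admits a local-hidden-state model: `tr_B((𝟙_A ⊗ F_{b|y}) ρ) =
∑_λ q(λ) P_B(b|y,λ) σ_λ` with `σ_λ` density matrices on `A`. -/
def Nonsteerable {da db : ℕ}
    (ρ : Matrix (Fin da × Fin db) (Fin da × Fin db) ℂ) : Prop :=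
  ∀ (Y B : Type) (_ : Fintype Y) (_ : Fintype B)
    (F : Y → B → Matrix (Fin db) (Fin db) ℂ),
    (∀ y, (∀ b, (F y b).PosSemidef) ∧ (∑ b, F y b) = 1) →
    ∃ (L : Type) (_ : Fintype L) (q : L → ℝ) (PB : L → Y → B → ℝ)
      (σ : L → Matrix (Fin da) (Fin da) ℂ),
      (∀ l, 0 ≤ q l) ∧ (∑ l, q l = 1) ∧
      (∀ l y, (∀ b, 0 ≤ PB l y b) ∧ (∑ b, PB l y b = 1)) ∧
      (∀ l, (σ l).PosSemidef ∧ (σ l).trace = 1) ∧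
      ∀ y b, steered ρ (F y b) = ∑ l, ((q l * PB l y b : ℝ) : ℂ) • σ l

open Matrix in
lemma sum_prod_pi {ι : Type} [Fintype ι] [DecidableEq ι] {κ : ι → Type}
    [∀ i, Fintype (κ i)] (f : (i : ι) → κ i → ℂ) :
    ∑ g : (i : ι) → κ i, ∏ i, f i (g i) = ∏ i, ∑ j, f i j :=
  (Fintype.prod_sum f).symm

open scoped MatrixOrder Matrix in
lemma psd_eq_conjTranspose_mul_self {n : Type} [Fintype n] [DecidableEq n]
    {M : Matrix n n ℂ} (hM : M.PosSemidef) : ∃ B : Matrix n n ℂ, M = Bᴴ * B := by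
  have h0 : 0 ≤ M := hM.nonneg
  refine ⟨CFC.sqrt M, ?_⟩
  rw [← Matrix.star_eq_conjTranspose, (CFC.sqrt_nonneg M).isSelfAdjoint.star_eq,
    CFC.sqrt_mul_sqrt_self M h0]

section Aux

open Matrix

variable {ι : Type} [Fintype ι] [DecidableEq ι]
variable {H : ι → Type} [∀ i, Fintype (H i)] [∀ i, DecidableEq (H i)]

lemma prodOp_mul (M N : (i : ι) → Matrix (H i) (H i) ℂ) :
    prodOp (fun i => M i * N i) = prodOp M * prodOp N := by
  ext u v
  rw [Matrix.mul_apply]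
  simp only [prodOp, Matrix.mul_apply]
  rw [← sum_prod_pi (fun i w => M i (u i) w * N i w (v i))]
  simp [Finset.prod_mul_distrib]

lemma prodOp_conjTranspose (M : (i : ι) → Matrix (H i) (H i) ℂ) :
    (prodOp M)ᴴ = prodOp (fun i => (M i)ᴴ) := by
  ext u v
  simp only [Matrix.conjTranspose_apply, prodOp]
  exact star_prod _ _

lemma prodOp_one : prodOp (fun i => (1 : Matrix (H i) (H i) ℂ)) = 1 := by
  ext u v
  by_cases h : u = v
  · subst h; simp [prodOp, Matrix.one_apply]
  · obtain ⟨i, hi⟩ := Function.ne_iff.mp h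
    rw [prodOp, Matrix.one_apply_ne h]
    exact Finset.prod_eq_zero (Finset.mem_univ i) (Matrix.one_apply_ne hi)

lemma prodOp_posSemidef {M : (i : ι) → Matrix (H i) (H i) ℂ}
    (hM : ∀ i, (M i).PosSemidef) : (prodOp M).PosSemidef := by
  choose B hB using fun i => psd_eq_conjTranspose_mul_self (hM i)
  have h : prodOp M = (prodOp B)ᴴ * prodOp B := by
    rw [prodOp_conjTranspose, ← prodOp_mul]
    exact congrArg prodOp (funext hB)
  rw [h]
  exact Matrix.posSemidef_conjTranspose_mul_self _

lemma prodOp_sum {A : ι → Type} [∀ i, Fintype (A i)]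
    (G : (i : ι) → A i → Matrix (H i) (H i) ℂ) :
    ∑ a : (i : ι) → A i, prodOp (fun i => G i (a i)) = prodOp (fun i => ∑ b, G i b) := by
  ext u v
  simp only [Matrix.sum_apply, prodOp]
  exact sum_prod_pi (fun i b => G i b (u i) (v i))

end Aux

section Aux2

open Matrix

lemma psd_diag_re_nonneg {n : Type} [Fintype n] [DecidableEq n]
    {N : Matrix n n ℂ} (hN : N.PosSemidef) (i : n) : 0 ≤ (N i i).re := by
  have h := hN.dotProduct_mulVec_nonneg (Pi.single i 1)
  have he : star (Pi.single i 1 : n → ℂ) ⬝ᵥ N.mulVec (Pi.single i 1) = N i i := by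
    simp [dotProduct, Matrix.mulVec, Pi.single_apply, mul_ite,
      Finset.sum_ite_eq, Finset.sum_ite_eq']
  rw [he] at h
  exact (Complex.le_def.mp h).1

lemma trace_mul_re_nonneg {n : Type} [Fintype n] [DecidableEq n]
    {ρ F : Matrix n n ℂ} (hρ : ρ.PosSemidef) (hF : F.PosSemidef) :
    0 ≤ (Matrix.trace (ρ * F)).re := by
  obtain ⟨B, hB⟩ := psd_eq_conjTranspose_mul_self hρ
  have h1 : ρ * F = Bᴴ * (B * F) := by rw [hB, Matrix.mul_assoc]
  rw [h1, Matrix.trace_mul_comm]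
  have hPSD : (B * F * Bᴴ).PosSemidef := hF.mul_mul_conjTranspose_same B
  rw [Matrix.trace, Complex.re_sum]
  exact Finset.sum_nonneg fun i _ => psd_diag_re_nonneg hPSD i

end Aux2
section Born

open Matrix

variable {ι : Type} [Fintype ι] [DecidableEq ι]

lemma sum_subtype_pred {β : Type} [Fintype β] (P : β → Prop) [DecidablePred P]
    (f : β → ℝ) :
    ∑ b : {b // P b}, f b.1 = ∑ b, if P b then f b else 0 := by
  rw [← Finset.sum_filter]
  exact (Finset.sum_subtype (Finset.univ.filter P) (by simp) f).symm

variable {H : ι → Type} [∀ i, Fintype (H i)] [∀ i, DecidableEq (H i)]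
variable {A X : ι → Type} [∀ i, Fintype (A i)] [∀ i, DecidableEq (A i)]

lemma born_sum_eq (ρ : Matrix ((i : ι) → H i) ((i : ι) → H i) ℂ)
    (E : (i : ι) → X i → A i → Matrix (H i) (H i) ℂ)
    (hE : ∀ i, IsPOVMFamily (E i)) (hτ : ρ.trace = 1) (x : (i : ι) → X i) :
    ∑ a, born ρ E a x = 1 := by
  unfold born
  rw [← Complex.re_sum, ← Matrix.trace_sum, ← Matrix.mul_sum, prodOp_sum,
    show (fun i => ∑ b, E i (x i) b) = (fun i => (1 : Matrix (H i) (H i) ℂ)) from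
      funext fun i => (hE i (x i)).2,
    prodOp_one, Matrix.mul_one, hτ]
  simp

lemma born_isDist (ρ : Matrix ((i : ι) → H i) ((i : ι) → H i) ℂ)
    (hρ : ρ.PosSemidef) (hτ : ρ.trace = 1)
    (E : (i : ι) → X i → A i → Matrix (H i) (H i) ℂ)
    (hE : ∀ i, IsPOVMFamily (E i)) : IsDist (born ρ E) := by
  constructor
  · intro a x
    exact trace_mul_re_nonneg hρ (prodOp_posSemidef fun i => ((hE i (x i)).1 (a i)))
  · exact born_sum_eq ρ E hE hτ

lemma marginal_born (ρ : Matrix ((i : ι) → H i) ((i : ι) → H i) ℂ)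
    (E : (i : ι) → X i → A i → Matrix (H i) (H i) ℂ)
    (hE : ∀ i, IsPOVMFamily (E i)) (S : Finset ι)
    (aS : (i : {i // i ∈ S}) → A i.1) (x : (i : ι) → X i) :
    marginal (born ρ E) S aS x =
      (Matrix.trace (ρ * prodOp (fun i =>
        if h : i ∈ S then E i (x i) (aS ⟨i, h⟩) else 1))).re := by
  set G : (i : ι) → A i → Matrix (H i) (H i) ℂ := fun i a =>
    if h : i ∈ S then (if a = aS ⟨i, h⟩ then E i (x i) a else 0) else E i (x i) a with hG
  have key : ∀ b : (i : ι) → A i,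
      (if (∀ i : {i // i ∈ S}, b i.1 = aS i) then born ρ E b x else 0)
        = (Matrix.trace (ρ * prodOp (fun i => G i (b i)))).re := by
    intro b
    by_cases hb : ∀ i : {i // i ∈ S}, b i.1 = aS i
    · rw [if_pos hb]
      have h2 : prodOp (fun i => G i (b i)) = prodOp (fun i => E i (x i) (b i)) := by
        refine congrArg prodOp (funext fun i => ?_)
        simp only [hG]
        by_cases h : i ∈ S
        · rw [dif_pos h, if_pos (hb ⟨i, h⟩)]
        · rw [dif_neg h]
      rw [h2]; rfl
    · rw [if_neg hb]
      push_neg at hb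
      obtain ⟨i₀, hi₀⟩ := hb
      have h2 : prodOp (fun i => G i (b i)) = 0 := by
        ext u v
        show (∏ i, G i (b i) (u i) (v i)) = 0
        refine Finset.prod_eq_zero (Finset.mem_univ i₀.1) ?_
        simp only [hG]
        rw [dif_pos i₀.2, if_neg (by simpa using hi₀)]
        simp
      rw [h2, Matrix.mul_zero, Matrix.trace_zero]
      simp
  have hm : marginal (born ρ E) S aS x
      = ∑ b, if (∀ i : {i // i ∈ S}, b i.1 = aS i) then born ρ E b x else 0 := by
    unfold marginal
    exact sum_subtype_pred (fun b : (i : ι) → A i => ∀ i : {i // i ∈ S}, b i.1 = aS i)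
      (fun b => born ρ E b x)
  rw [hm, Finset.sum_congr rfl (fun b _ => key b), ← Complex.re_sum,
    ← Matrix.trace_sum, ← Matrix.mul_sum, prodOp_sum]
  have h3 : (fun i => ∑ b, G i b)
      = fun i => if h : i ∈ S then E i (x i) (aS ⟨i, h⟩) else 1 := by
    funext i
    simp only [hG]
    by_cases h : i ∈ S
    · simp only [dif_pos h]
      rw [Finset.sum_ite_eq' Finset.univ (aS ⟨i, h⟩) (fun a => E i (x i) a)]
      simp
    · simp only [dif_neg h]
      exact (hE i (x i)).2
  rw [h3]

lemma born_nonSignalling (ρ : Matrix ((i : ι) → H i) ((i : ι) → H i) ℂ)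
    (E : (i : ι) → X i → A i → Matrix (H i) (H i) ℂ)
    (hE : ∀ i, IsPOVMFamily (E i)) : NonSignalling (born ρ E) := by
  intro S aS x x' hxx'
  rw [marginal_born ρ E hE, marginal_born ρ E hE]
  have h3 : (fun i => if h : i ∈ S then E i (x i) (aS ⟨i, h⟩) else (1 : Matrix (H i) (H i) ℂ))
      = fun i => if h : i ∈ S then E i (x' i) (aS ⟨i, h⟩) else 1 := by
    funext i
    by_cases h : i ∈ S
    · rw [dif_pos h, dif_pos h, hxx' i h]
    · rw [dif_neg h, dif_neg h]
  rw [h3]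

end Born
section Aux3

lemma prod_split_pred {ι : Type} [Fintype ι] [DecidableEq ι]
    (p : ι → Prop) [DecidablePred p] (i₀ : ι) (hp : ∀ i, p i ↔ i ≠ i₀) (f : ι → ℂ) :
    ∏ i, f i = f i₀ * ∏ i : {i // p i}, f i.1 := by
  rw [← Finset.mul_prod_erase Finset.univ f (Finset.mem_univ i₀)]
  congr 1
  exact Finset.prod_subtype (Finset.univ.erase i₀) (fun x => by simp [hp]) f

lemma trace_mul_expand {n : Type} [Fintype n] (A B : Matrix n n ℂ) :
    (A * B).trace = ∑ u, ∑ v, A u v * B v u := by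
  simp [Matrix.trace, Matrix.mul_apply, Matrix.diag]

lemma marginal_empty {ι : Type} [Fintype ι] [DecidableEq ι] {A X : ι → Type}
    [∀ i, Fintype (A i)] [∀ i, DecidableEq (A i)]
    (P : ((i : ι) → A i) → ((i : ι) → X i) → ℝ)
    (aS : (i : {i // i ∈ (∅ : Finset ι)}) → A i.1) (x : (i : ι) → X i) :
    marginal P ∅ aS x = ∑ b, P b x := by
  unfold marginal
  rw [sum_subtype_pred (fun b : (i : ι) → A i => ∀ i : {i // i ∈ (∅ : Finset ι)}, b i.1 = aS i)
    (fun b => P b x)]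
  exact Finset.sum_congr rfl fun b _ =>
    if_pos (fun i => absurd i.2 (Finset.notMem_empty i.1))

lemma nonSignalling_of_subsingleton {ι : Type} [Fintype ι] [DecidableEq ι] [Subsingleton ι]
    {A X : ι → Type} [∀ i, Fintype (A i)] [∀ i, DecidableEq (A i)]
    {P : ((i : ι) → A i) → ((i : ι) → X i) → ℝ} (hP : IsDist P) : NonSignalling P := by
  intro S aS x x' h
  rcases S.eq_empty_or_nonempty with hS | hS
  · subst hS
    rw [marginal_empty, marginal_empty, hP.2 x, hP.2 x']
  · have hx : x = x' := by
      funext i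
      obtain ⟨j, hj⟩ := hS
      have : i = j := Subsingleton.elim i j
      subst this
      exact h i hj
    rw [hx]

end Aux3
section Star

variable {m : ℕ} {dA dB : Fin (m + 1) → ℕ} {p : Option (Fin (m + 1)) → Prop}

/-- The center index in the `p`-subtype. -/
@[reducible] def cIdx (hp : ∀ i, p i ↔ i ≠ some 0) : {i // p i} :=
  ⟨none, (hp none).mpr (by simp)⟩

/-- The leaf index `some j` in the `p`-subtype, for `j ≠ 0`. -/
@[reducible] def lfIdx (hp : ∀ i, p i ↔ i ≠ some 0) (j : Fin (m + 1)) (hj : j ≠ 0) : {i // p i} :=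
  ⟨some j, (hp _).mpr (by simp [hj])⟩

/-- The reduced star state, with `σ0` in place of the steered edge-0 state. -/
def tauL (dA dB : Fin (m + 1) → ℕ) (hp : ∀ i, p i ↔ i ≠ some 0)
    (σ0 : Matrix (Fin (dA 0)) (Fin (dA 0)) ℂ)
    (ρ : (j : Fin (m + 1)) →
      Matrix (Fin (dA j) × Fin (dB j)) (Fin (dA j) × Fin (dB j)) ℂ) :
    Matrix ((i : {i // p i}) → starH2 dA dB i.1) ((i : {i // p i}) → starH2 dA dB i.1) ℂ :=
  fun u v => σ0 (u (cIdx hp) 0) (v (cIdx hp) 0) *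
    ∏ j : {j : Fin (m + 1) // j ≠ 0},
      ρ j.1 (u (cIdx hp) j.1, u (lfIdx hp j.1 j.2)) (v (cIdx hp) j.1, v (lfIdx hp j.1 j.2))

/-- Glue a `B₁`-value and a rest-configuration into a full configuration. -/
def glue3 (dA dB : Fin (m + 1) → ℕ) (hp : ∀ i, p i ↔ i ≠ some 0) [DecidablePred p]
    (bu : Fin (dB 0) × ((i : {i // p i}) → starH2 dA dB i.1)) :
    (i : Option (Fin (m + 1))) → starH2 dA dB i :=
  fun i => if h : p i then bu.2 ⟨i, h⟩
    else cast (congrArg (starH2 dA dB)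
      ((not_not.mp (fun hne => h ((hp i).mpr hne)) : i = some 0).symm)) bu.1

variable [DecidablePred p] (hp : ∀ i, p i ↔ i ≠ some 0)

lemma glue3_mem (bu) (i : {i // p i}) : glue3 dA dB hp bu i.1 = bu.2 i := by
  unfold glue3
  rw [dif_pos i.2]

lemma glue3_none (bu) : glue3 dA dB hp bu none = bu.2 (cIdx hp) :=
  glue3_mem hp bu (cIdx hp)

lemma glue3_some (bu) (j : Fin (m + 1)) (hj : j ≠ 0) :
    glue3 dA dB hp bu (some j) = bu.2 (lfIdx hp j hj) :=
  glue3_mem hp bu (lfIdx hp j hj)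

lemma glue3_some0 (bu) : glue3 dA dB hp bu (some 0) = bu.1 := by
  unfold glue3
  rw [dif_neg (fun h => (hp (some 0)).mp h rfl)]
  exact cast_eq _ _

lemma glue3_bijective : Function.Bijective (glue3 dA dB hp (p := p)) := by
  rw [Function.bijective_iff_has_inverse]
  refine ⟨fun u => (u (some 0), fun i => u i.1), ?_, ?_⟩
  · intro bu
    refine Prod.ext (glue3_some0 hp bu) ?_
    funext i
    exact glue3_mem hp bu i
  · intro u
    funext i
    by_cases h : p i
    · exact glue3_mem hp (u (some 0), fun i => u i.1) ⟨i, h⟩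
    · have hi : i = some 0 := not_not.mp (fun hne => h ((hp i).mpr hne))
      subst hi
      exact glue3_some0 hp _

/-- Glue hidden-index data into a rest-configuration. -/
def glue2 (dA dB : Fin (m + 1) → ℕ) (hp : ∀ i, p i ↔ i ≠ some 0)
    (k : Fin (dA 0) × ((j : {j : Fin (m + 1) // j ≠ 0}) → Fin (dA j.1) × Fin (dB j.1))) :
    (i : {i // p i}) → starH2 dA dB i.1 := fun i =>
  Option.rec (motive := fun o => p o → starH2 dA dB o)
    (fun _ => fun j => if h : j = 0 then cast (congrArg (fun t => Fin (dA t)) h.symm) k.1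
      else (k.2 ⟨j, h⟩).1)
    (fun j hpj => (k.2 ⟨j, fun h0 => (hp (some j)).mp hpj (congrArg some h0)⟩).2)
    i.1 i.2

lemma glue2_c_zero (k) : glue2 dA dB hp k (cIdx hp) 0 = k.1 := by
  show (if h : (0 : Fin (m+1)) = 0 then cast (congrArg (fun t => Fin (dA t)) h.symm) k.1
      else (k.2 ⟨0, h⟩).1) = k.1
  rw [dif_pos rfl]
  exact cast_eq _ _

lemma glue2_c_ne (k) (j : {j : Fin (m + 1) // j ≠ 0}) :
    glue2 dA dB hp k (cIdx hp) j.1 = (k.2 j).1 := by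
  show (if h : j.1 = 0 then cast (congrArg (fun t => Fin (dA t)) h.symm) k.1
      else (k.2 ⟨j.1, h⟩).1) = (k.2 j).1
  rw [dif_neg j.2]

lemma glue2_lf (k) (j : Fin (m + 1)) (hj : j ≠ 0) :
    glue2 dA dB hp k (lfIdx hp j hj) = (k.2 ⟨j, hj⟩).2 := rfl

lemma glue2_bijective : Function.Bijective (glue2 dA dB hp (p := p)) := by
  rw [Function.bijective_iff_has_inverse]
  refine ⟨fun u => (u (cIdx hp) 0, fun j => (u (cIdx hp) j.1, u (lfIdx hp j.1 j.2))), ?_, ?_⟩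
  · intro k
    refine Prod.ext (glue2_c_zero hp k) ?_
    funext j
    refine Prod.ext ?_ ?_
    · exact glue2_c_ne hp k j
    · exact glue2_lf hp k j.1 j.2
  · intro u
    funext i
    obtain ⟨iv, hpi⟩ := i
    cases iv with
    | none =>
      funext j
      by_cases h : j = 0
      · subst h
        exact glue2_c_zero hp _
      · exact glue2_c_ne hp _ ⟨j, h⟩
    | some j => rfl

end Star
section TauL

open Matrix

variable {m : ℕ} {dA dB : Fin (m + 1) → ℕ} {p : Option (Fin (m + 1)) → Prop}
variable (hp : ∀ i, p i ↔ i ≠ some 0) [DecidablePred p]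

lemma sum_prod_split {α β : Type} [Fintype α] [Fintype β]
    (f : α → ℂ) (g : β → ℂ) :
    ∑ k : α × β, f k.1 * g k.2 = (∑ a, f a) * ∑ b, g b := by
  rw [Fintype.sum_mul_sum]
  exact Fintype.sum_prod_type _

lemma tauL_posSemidef (σ0 : Matrix (Fin (dA 0)) (Fin (dA 0)) ℂ) (hσ0 : σ0.PosSemidef)
    (ρ : (j : Fin (m + 1)) →
      Matrix (Fin (dA j) × Fin (dB j)) (Fin (dA j) × Fin (dB j)) ℂ)
    (hρ : ∀ j, (ρ j).PosSemidef) : (tauL dA dB hp σ0 ρ).PosSemidef := by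
  obtain ⟨A0, hA0⟩ := psd_eq_conjTranspose_mul_self hσ0
  choose B hB using fun j => psd_eq_conjTranspose_mul_self (hρ j)
  set M : Matrix (Fin (dA 0) × ((j : {j : Fin (m + 1) // j ≠ 0}) → Fin (dA j.1) × Fin (dB j.1)))
      ((i : {i // p i}) → starH2 dA dB i.1) ℂ := fun k u =>
    A0 k.1 (u (cIdx hp) 0) *
      ∏ j : {j : Fin (m + 1) // j ≠ 0},
        B j.1 (k.2 j) (u (cIdx hp) j.1, u (lfIdx hp j.1 j.2)) with hM
  have key : tauL dA dB hp σ0 ρ = Mᴴ * M := by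
    ext u v
    rw [Matrix.mul_apply]
    have e1 : ∀ k, Mᴴ u k * M k v
        = (star (A0 k.1 (u (cIdx hp) 0)) * A0 k.1 (v (cIdx hp) 0)) *
          ∏ j : {j : Fin (m + 1) // j ≠ 0},
            (star (B j.1 (k.2 j) (u (cIdx hp) j.1, u (lfIdx hp j.1 j.2))) *
                B j.1 (k.2 j) (v (cIdx hp) j.1, v (lfIdx hp j.1 j.2))) := by
      intro k
      rw [Matrix.conjTranspose_apply, hM]
      simp only [star_mul', star_prod, Finset.prod_mul_distrib]
      ring
    rw [Finset.sum_congr rfl (fun k _ => e1 k),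
      sum_prod_split (fun k1 => star (A0 k1 (u (cIdx hp) 0)) * A0 k1 (v (cIdx hp) 0))
        (fun k2 : (j : {j : Fin (m + 1) // j ≠ 0}) → Fin (dA j.1) × Fin (dB j.1) => ∏ j : {j : Fin (m + 1) // j ≠ 0},
          (star (B j.1 (k2 j) (u (cIdx hp) j.1, u (lfIdx hp j.1 j.2))) *
            B j.1 (k2 j) (v (cIdx hp) j.1, v (lfIdx hp j.1 j.2))))]
    unfold tauL
    congr 1
    · rw [hA0, Matrix.mul_apply]
      exact Finset.sum_congr rfl fun k1 _ => by rw [Matrix.conjTranspose_apply]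
    · rw [sum_prod_pi (fun (j : {j : Fin (m + 1) // j ≠ 0}) w =>
        star (B j.1 w (u (cIdx hp) j.1, u (lfIdx hp j.1 j.2))) *
        B j.1 w (v (cIdx hp) j.1, v (lfIdx hp j.1 j.2)))]
      refine Finset.prod_congr rfl fun j _ => ?_
      rw [hB j.1, Matrix.mul_apply]
      exact Finset.sum_congr rfl fun w _ => by rw [Matrix.conjTranspose_apply]
  rw [key]
  exact Matrix.posSemidef_conjTranspose_mul_self _

lemma tauL_trace (σ0 : Matrix (Fin (dA 0)) (Fin (dA 0)) ℂ) (hσ0 : σ0.trace = 1)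
    (ρ : (j : Fin (m + 1)) →
      Matrix (Fin (dA j) × Fin (dB j)) (Fin (dA j) × Fin (dB j)) ℂ)
    (hρ : ∀ j, (ρ j).trace = 1) : (tauL dA dB hp σ0 ρ).trace = 1 := by
  have h0 : (tauL dA dB hp σ0 ρ).trace
      = ∑ k, tauL dA dB hp σ0 ρ (glue2 dA dB hp k) (glue2 dA dB hp k) :=
    (Fintype.sum_bijective (glue2 dA dB hp) (glue2_bijective hp) _ _ (fun k => rfl)).symm
  have h1 : ∀ k, tauL dA dB hp σ0 ρ (glue2 dA dB hp k) (glue2 dA dB hp k)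
      = σ0 k.1 k.1 * ∏ j : {j : Fin (m + 1) // j ≠ 0}, ρ j.1 (k.2 j) (k.2 j) := by
    intro k
    unfold tauL
    rw [glue2_c_zero]
    congr 1
    refine Finset.prod_congr rfl fun j _ => ?_
    rw [glue2_c_ne hp k j, glue2_lf hp k j.1 j.2]
  rw [h0, Finset.sum_congr rfl (fun k _ => h1 k),
    sum_prod_split (fun k1 => σ0 k1 k1)
      (fun k2 : (j : {j : Fin (m + 1) // j ≠ 0}) → Fin (dA j.1) × Fin (dB j.1) => ∏ j : {j : Fin (m + 1) // j ≠ 0}, ρ j.1 (k2 j) (k2 j)),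
    sum_prod_pi (fun (j : {j : Fin (m + 1) // j ≠ 0}) w => ρ j.1 w w)]
  have h2 : ∑ k1, σ0 k1 k1 = 1 := hσ0
  have h3 : ∀ j : {j : Fin (m + 1) // j ≠ 0}, ∑ w, ρ j.1 w w = 1 := fun j => hρ j.1
  rw [h2, Finset.prod_congr rfl (fun j _ => h3 j)]
  simp

lemma steered_entry {da db : ℕ} (ρ0 : Matrix (Fin da × Fin db) (Fin da × Fin db) ℂ)
    (F : Matrix (Fin db) (Fin db) ℂ) (a1 a2 : Fin da) :
    ∑ b : Fin db, ∑ b'' : Fin db, ρ0 (a1, b) (a2, b'') * F b'' b = steered ρ0 F a1 a2 := by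
  unfold steered
  rw [Finset.sum_comm]
  exact Finset.sum_congr rfl fun b'' _ => Finset.sum_congr rfl fun b _ => by ring

end TauL
section Main

set_option maxHeartbeats 1000000 in
lemma main_split (m : ℕ) (dA dB : Fin (m + 1) → ℕ)
    (ρ : (j : Fin (m + 1)) →
      Matrix (Fin (dA j) × Fin (dB j)) (Fin (dA j) × Fin (dB j)) ℂ)
    (hρ : ∀ j, (ρ j).PosSemidef ∧ (ρ j).trace = 1)
    (hns : Nonsteerable (ρ 0))
    (X A : Option (Fin (m + 1)) → Type)
    [instX : ∀ i, Fintype (X i)] [instA : ∀ i, Fintype (A i)]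
    [instA' : ∀ i, DecidableEq (A i)]
    (E : (i : Option (Fin (m + 1))) → X i → A i →
      Matrix (starH2 dA dB i) (starH2 dA dB i) ℂ)
    (hE : ∀ i, IsPOVMFamily (E i)) :
    ∃ (L : Type) (_ : Fintype L) (q : L → ℝ) (P₁ : L → X (some 0) → A (some 0) → ℝ),
      (∀ l, 0 ≤ q l) ∧ (∑ l, q l = 1) ∧
      (∀ l y, (∀ b, 0 ≤ P₁ l y b) ∧ (∑ b, P₁ l y b = 1)) ∧
      ∀ (p : Option (Fin (m + 1)) → Prop) (instp : DecidablePred p)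
        (hp : ∀ i, p i ↔ i ≠ some 0),
        ∃ P₂ : L → (((i : {i // p i}) → A i.1) → ((i : {i // p i}) → X i.1) → ℝ),
          (∀ l, IsDist (P₂ l) ∧ NonSignalling (P₂ l)) ∧
          ∀ a x, born (starState dA dB ρ) E a x =
            ∑ l, q l * P₁ l (x (some 0)) (a (some 0)) *
              P₂ l (fun i => a i.1) (fun i => x i.1) := by
  obtain ⟨L, instL, q, PB, σ, hq0, hq1, hPB, hσ, hsteer⟩ :=
    hns (X (some 0)) (A (some 0)) (instX _) (instA _) (E (some 0)) (hE (some 0))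
  refine ⟨L, instL, q, PB, hq0, hq1, hPB, ?_⟩
  intro p instp hp
  refine ⟨fun l => born (tauL dA dB hp (σ l) ρ) (fun i => E i.1), fun l => ?_, ?_⟩
  · constructor
    · exact born_isDist _ (tauL_posSemidef hp _ (hσ l).1 ρ (fun j => (hρ j).1))
        (tauL_trace hp _ (hσ l).2 ρ (fun j => (hρ j).2)) _ (fun i => hE i.1)
    · exact born_nonSignalling _ _ (fun i => hE i.1)
  · intro a x
    have hsteerE : ∀ (a1 a2 : Fin (dA 0)),
        steered (ρ 0) (E (some 0) (x (some 0)) (a (some 0))) a1 a2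
          = ∑ l, ((q l * PB l (x (some 0)) (a (some 0)) : ℝ) : ℂ) * σ l a1 a2 := by
      intro a1 a2
      rw [hsteer (x (some 0)) (a (some 0))]
      simp [Matrix.sum_apply, Matrix.smul_apply, smul_eq_mul]
    -- step 1: expand the trace over the glued configuration space
    have lhs1 : Matrix.trace (starState dA dB ρ * prodOp (fun i => E i (x i) (a i)))
        = ∑ b : Fin (dB 0), ∑ u' : (i : {i // p i}) → starH2 dA dB i.1,
          ∑ b'' : Fin (dB 0), ∑ v' : (i : {i // p i}) → starH2 dA dB i.1,
            starState dA dB ρ (glue3 dA dB hp (b, u')) (glue3 dA dB hp (b'', v')) *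
            prodOp (fun i => E i (x i) (a i)) (glue3 dA dB hp (b'', v'))
              (glue3 dA dB hp (b, u')) := by
      rw [trace_mul_expand]
      have e1 : ∀ u, (∑ v, starState dA dB ρ u v *
            prodOp (fun i => E i (x i) (a i)) v u)
          = ∑ bv : Fin (dB 0) × ((i : {i // p i}) → starH2 dA dB i.1),
              starState dA dB ρ u (glue3 dA dB hp bv) *
              prodOp (fun i => E i (x i) (a i)) (glue3 dA dB hp bv) u :=
        fun u => (Fintype.sum_bijective (glue3 dA dB hp) (glue3_bijective hp) _ _
          (fun bv => rfl)).symm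
      rw [Finset.sum_congr rfl (fun u _ => e1 u)]
      have e2 : (∑ u, ∑ bv : Fin (dB 0) × ((i : {i // p i}) → starH2 dA dB i.1),
            starState dA dB ρ u (glue3 dA dB hp bv) *
            prodOp (fun i => E i (x i) (a i)) (glue3 dA dB hp bv) u)
          = ∑ bu : Fin (dB 0) × ((i : {i // p i}) → starH2 dA dB i.1),
            ∑ bv : Fin (dB 0) × ((i : {i // p i}) → starH2 dA dB i.1),
              starState dA dB ρ (glue3 dA dB hp bu) (glue3 dA dB hp bv) *
              prodOp (fun i => E i (x i) (a i)) (glue3 dA dB hp bv)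
                (glue3 dA dB hp bu) :=
        (Fintype.sum_bijective (glue3 dA dB hp) (glue3_bijective hp) _ _
          (fun bu => rfl)).symm
      rw [e2]
      simp only [Fintype.sum_prod_type]
    -- step 2: reorder the sums
    have lhs2 : (∑ b : Fin (dB 0), ∑ u' : (i : {i // p i}) → starH2 dA dB i.1,
          ∑ b'' : Fin (dB 0), ∑ v' : (i : {i // p i}) → starH2 dA dB i.1,
            starState dA dB ρ (glue3 dA dB hp (b, u')) (glue3 dA dB hp (b'', v')) *
            prodOp (fun i => E i (x i) (a i)) (glue3 dA dB hp (b'', v'))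
              (glue3 dA dB hp (b, u')))
        = ∑ u' : (i : {i // p i}) → starH2 dA dB i.1,
          ∑ v' : (i : {i // p i}) → starH2 dA dB i.1,
          ∑ b : Fin (dB 0), ∑ b'' : Fin (dB 0),
            starState dA dB ρ (glue3 dA dB hp (b, u')) (glue3 dA dB hp (b'', v')) *
            prodOp (fun i => E i (x i) (a i)) (glue3 dA dB hp (b'', v'))
              (glue3 dA dB hp (b, u')) := by
      rw [Finset.sum_comm]
      refine Finset.sum_congr rfl fun u' _ => ?_
      exact (Finset.sum_congr rfl fun b _ => Finset.sum_comm).trans Finset.sum_comm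
    -- step 3: the per-(u',v') inner sum over b, b''
    have inner : ∀ (u' v' : (i : {i // p i}) → starH2 dA dB i.1),
        (∑ b : Fin (dB 0), ∑ b'' : Fin (dB 0),
            starState dA dB ρ (glue3 dA dB hp (b, u')) (glue3 dA dB hp (b'', v')) *
            prodOp (fun i => E i (x i) (a i)) (glue3 dA dB hp (b'', v'))
              (glue3 dA dB hp (b, u')))
        = ∑ l, ((q l * PB l (x (some 0)) (a (some 0)) : ℝ) : ℂ) *
            (tauL dA dB hp (σ l) ρ u' v' *
             prodOp (fun i : {i // p i} => E i.1 (x i.1) (a i.1)) v' u') := by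
      intro u' v'
      have hsummand : ∀ b b'',
          starState dA dB ρ (glue3 dA dB hp (b, u')) (glue3 dA dB hp (b'', v')) *
          prodOp (fun i => E i (x i) (a i)) (glue3 dA dB hp (b'', v'))
            (glue3 dA dB hp (b, u'))
          = (ρ 0 (u' (cIdx hp) 0, b) (v' (cIdx hp) 0, b'') *
              E (some 0) (x (some 0)) (a (some 0)) b'' b) *
            ((∏ j : {j : Fin (m + 1) // j ≠ 0},
                ρ j.1 (u' (cIdx hp) j.1, u' (lfIdx hp j.1 j.2))
                      (v' (cIdx hp) j.1, v' (lfIdx hp j.1 j.2))) *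
             prodOp (fun i : {i // p i} => E i.1 (x i.1) (a i.1)) v' u') := by
        intro b b''
        have hS : starState dA dB ρ (glue3 dA dB hp (b, u')) (glue3 dA dB hp (b'', v'))
            = ρ 0 (u' (cIdx hp) 0, b) (v' (cIdx hp) 0, b'') *
              ∏ j : {j : Fin (m + 1) // j ≠ 0},
                ρ j.1 (u' (cIdx hp) j.1, u' (lfIdx hp j.1 j.2))
                      (v' (cIdx hp) j.1, v' (lfIdx hp j.1 j.2)) := by
          show (∏ j : Fin (m + 1),
              ρ j (glue3 dA dB hp (b, u') none j, glue3 dA dB hp (b, u') (some j))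
                  (glue3 dA dB hp (b'', v') none j, glue3 dA dB hp (b'', v') (some j))) = _
          rw [prod_split_pred (fun j : Fin (m + 1) => j ≠ 0) 0 (fun _ => Iff.rfl)]
          congr 1
          · rw [glue3_none hp, glue3_none hp, glue3_some0 hp, glue3_some0 hp]
          · refine Finset.prod_congr rfl fun j _ => ?_
            rw [glue3_none hp, glue3_none hp, glue3_some hp _ j.1 j.2,
              glue3_some hp _ j.1 j.2]
        have hN : prodOp (fun i => E i (x i) (a i)) (glue3 dA dB hp (b'', v'))
              (glue3 dA dB hp (b, u'))
            = E (some 0) (x (some 0)) (a (some 0)) b'' b *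
              prodOp (fun i : {i // p i} => E i.1 (x i.1) (a i.1)) v' u' := by
          show (∏ i, E i (x i) (a i) (glue3 dA dB hp (b'', v') i)
              (glue3 dA dB hp (b, u') i)) = _
          rw [prod_split_pred p (some 0) hp]
          congr 1
          · rw [glue3_some0 hp, glue3_some0 hp]
          · show (∏ i : {i // p i}, E i.1 (x i.1) (a i.1)
                (glue3 dA dB hp (b'', v') i.1) (glue3 dA dB hp (b, u') i.1)) = _
            refine Finset.prod_congr rfl fun i _ => ?_
            rw [glue3_mem hp _ i, glue3_mem hp _ i]
        rw [hS, hN]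
        ring
      rw [Finset.sum_congr rfl fun b _ => Finset.sum_congr rfl fun b'' _ => hsummand b b'']
      simp only [← Finset.sum_mul]
      rw [steered_entry (ρ 0) (E (some 0) (x (some 0)) (a (some 0))) (u' (cIdx hp) 0)
        (v' (cIdx hp) 0), hsteerE, Finset.sum_mul]
      refine Finset.sum_congr rfl fun l _ => ?_
      show _ = ((q l * PB l (x (some 0)) (a (some 0)) : ℝ) : ℂ) *
        ((σ l (u' (cIdx hp) 0) (v' (cIdx hp) 0) *
          ∏ j : {j : Fin (m + 1) // j ≠ 0},
            ρ j.1 (u' (cIdx hp) j.1, u' (lfIdx hp j.1 j.2))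
                  (v' (cIdx hp) j.1, v' (lfIdx hp j.1 j.2))) *
         prodOp (fun i : {i // p i} => E i.1 (x i.1) (a i.1)) v' u')
      ring
    -- step 4: expand the right-hand side traces
    have rhs1 : (∑ l, ((q l * PB l (x (some 0)) (a (some 0)) : ℝ) : ℂ) *
          Matrix.trace (tauL dA dB hp (σ l) ρ *
            prodOp (fun i : {i // p i} => E i.1 (x i.1) (a i.1))))
        = ∑ u' : (i : {i // p i}) → starH2 dA dB i.1,
          ∑ v' : (i : {i // p i}) → starH2 dA dB i.1,
          ∑ l, ((q l * PB l (x (some 0)) (a (some 0)) : ℝ) : ℂ) *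
            (tauL dA dB hp (σ l) ρ u' v' *
             prodOp (fun i : {i // p i} => E i.1 (x i.1) (a i.1)) v' u') := by
      have e3 : ∀ l, ((q l * PB l (x (some 0)) (a (some 0)) : ℝ) : ℂ) *
            Matrix.trace (tauL dA dB hp (σ l) ρ *
              prodOp (fun i : {i // p i} => E i.1 (x i.1) (a i.1)))
          = ∑ u', ∑ v', ((q l * PB l (x (some 0)) (a (some 0)) : ℝ) : ℂ) *
              (tauL dA dB hp (σ l) ρ u' v' *
               prodOp (fun i : {i // p i} => E i.1 (x i.1) (a i.1)) v' u') := by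
        intro l
        rw [trace_mul_expand, Finset.mul_sum]
        exact Finset.sum_congr rfl fun u' _ => Finset.mul_sum _ _ _
      rw [Finset.sum_congr rfl fun l _ => e3 l, Finset.sum_comm]
      exact Finset.sum_congr rfl fun u' _ => Finset.sum_comm
    have keyC : Matrix.trace (starState dA dB ρ * prodOp (fun i => E i (x i) (a i)))
        = ∑ l, ((q l * PB l (x (some 0)) (a (some 0)) : ℝ) : ℂ) *
            Matrix.trace (tauL dA dB hp (σ l) ρ *
              prodOp (fun i : {i // p i} => E i.1 (x i.1) (a i.1))) := by
      rw [lhs1, lhs2, rhs1]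
      exact Finset.sum_congr rfl fun u' _ => Finset.sum_congr rfl fun v' _ => inner u' v'
    show (Matrix.trace (starState dA dB ρ * prodOp (fun i => E i (x i) (a i)))).re = _
    rw [keyC, Complex.re_sum]
    refine Finset.sum_congr rfl fun l _ => ?_
    rw [Complex.re_ofReal_mul]
    rfl

end Main

set_option maxHeartbeats 1000000

/-- **Lemma 8 (bilocality of star networks with a nonsteerable edge).**
Let `τ = ⊗ⱼ ρ⁽ʲ⁾` be the star PEN state on `n = m + 2 ≥ 3` parties (center `none`,
leaves `some j`).  If `ρ⁽⁰⁾` (the state of edge `0`) is nonsteerable from the leaf `B₁`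
to the center, then every outcome distribution obtained from `τ` by local POVMs splits,
with nonsignalling components, across the bipartition `B₁ | rest`; in particular `τ` is
not genuinely multipartite nonlocal. -/
theorem star_nonsteerable_not_GMNL (m : ℕ) (hm : 1 ≤ m) (dA dB : Fin (m + 1) → ℕ)
    (ρ : (j : Fin (m + 1)) →
      Matrix (Fin (dA j) × Fin (dB j)) (Fin (dA j) × Fin (dB j)) ℂ)
    (hρ : ∀ j, (ρ j).PosSemidef ∧ (ρ j).trace = 1)
    (hns : Nonsteerable (ρ 0)) :
    (∀ (X A : Option (Fin (m + 1)) → Type)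
       (instX : ∀ i, Fintype (X i)) (instA : ∀ i, Fintype (A i))
       (instA' : ∀ i, DecidableEq (A i))
       (E : (i : Option (Fin (m + 1))) → X i → A i →
             Matrix (starH2 dA dB i) (starH2 dA dB i) ℂ),
       (∀ i, IsPOVMFamily (E i)) →
       ∃ (L : Type) (_ : Fintype L) (q : L → ℝ)
         (P₁ : L → X (some 0) → A (some 0) → ℝ)
         (P₂ : L → (((i : {i : Option (Fin (m + 1)) // i ≠ some 0}) → A i.1) →
                    ((i : {i : Option (Fin (m + 1)) // i ≠ some 0}) → X i.1) → ℝ)),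
         (∀ l, 0 ≤ q l) ∧ (∑ l, q l = 1) ∧
         (∀ l y, (∀ b, 0 ≤ P₁ l y b) ∧ (∑ b, P₁ l y b = 1)) ∧
         (∀ l, IsDist (P₂ l) ∧ NonSignalling (P₂ l)) ∧
         (∀ a x, born (starState dA dB ρ) E a x =
            ∑ l, q l * P₁ l (x (some 0)) (a (some 0)) *
              P₂ l (fun i => a i.1) (fun i => x i.1)))
    ∧ ¬ IsGMNL (starState dA dB ρ) := by
  constructor
  · intro X A instX instA instA' E hE
    obtain ⟨L, instL, q, P₁, hq0, hq1, hP₁, hrest⟩ :=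
      main_split m dA dB ρ hρ hns X A (instX := instX) (instA := instA) (instA' := instA') E hE
    obtain ⟨P₂, hP₂, hborn⟩ := hrest (fun i => i ≠ some 0)
      (fun _ => by infer_instance) (fun i => Iff.rfl)
    exact ⟨L, instL, q, P₁, P₂, hq0, hq1, hP₁, hP₂, hborn⟩
  · rintro ⟨X, A, instX, instA, instA', E, hE, hnb⟩
    apply hnb
    obtain ⟨L, instL, q, P₁, hq0, hq1, hP₁, hrest⟩ :=
      main_split m dA dB ρ hρ hns X A (instX := instX) (instA := instA) (instA' := instA') E hE
    obtain ⟨P₂, hP₂, hborn⟩ := hrest (fun i => i ∉ ({some 0} : Finset (Option (Fin (m + 1)))))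
      (fun _ => by infer_instance) (fun i => by simp)
    refine ⟨L, instL,
      (fun M l => if M = ({some 0} : Finset (Option (Fin (m + 1)))) then q l else 0),
      (fun M l a' x' => if h : some 0 ∈ M then P₁ l (x' ⟨some 0, h⟩) (a' ⟨some 0, h⟩) else 0),
      (fun M l a' x' => if h : M ⊆ ({some 0} : Finset (Option (Fin (m + 1)))) then
        P₂ l (fun i => a' ⟨i.1, fun hm => i.2 (h hm)⟩)
             (fun i => x' ⟨i.1, fun hm => i.2 (h hm)⟩) else 0),
      ?_, ?_, ?_, ?_⟩
    · intro M l
      dsimp only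
      split_ifs
      · exact hq0 l
      · exact le_refl 0
    · rw [Fintype.sum_eq_single ({some 0} : Finset (Option (Fin (m + 1))))
        (fun M hM => by simp [if_neg hM])]
      simpa using hq1
    · intro M l hql
      have hM : M = ({some 0} : Finset (Option (Fin (m + 1)))) := by
        by_contra hc
        exact hql (if_neg hc)
      subst hM
      dsimp only
      haveI hsub : Subsingleton {i : Option (Fin (m + 1)) //
          i ∈ ({some 0} : Finset (Option (Fin (m + 1))))} := by
        constructor
        intro i j
        apply Subtype.ext
        have hi := Finset.mem_singleton.mp i.2
        have hj := Finset.mem_singleton.mp j.2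
        rw [hi, hj]
      have heq1 : (fun (a' : (i : {i : Option (Fin (m + 1)) //
              i ∈ ({some 0} : Finset (Option (Fin (m + 1))))}) → A i.1)
            (x' : (i : {i : Option (Fin (m + 1)) //
              i ∈ ({some 0} : Finset (Option (Fin (m + 1))))}) → X i.1) =>
            if h : some 0 ∈ ({some 0} : Finset (Option (Fin (m + 1)))) then
              P₁ l (x' ⟨some 0, h⟩) (a' ⟨some 0, h⟩) else 0)
          = fun a' x' => P₁ l (x' ⟨some 0, Finset.mem_singleton_self _⟩)
              (a' ⟨some 0, Finset.mem_singleton_self _⟩) := by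
        funext a' x'
        rw [dif_pos (Finset.mem_singleton_self (some 0))]
      have heq2 : (fun (a' : (i : {i : Option (Fin (m + 1)) //
              i ∉ ({some 0} : Finset (Option (Fin (m + 1))))}) → A i.1)
            (x' : (i : {i : Option (Fin (m + 1)) //
              i ∉ ({some 0} : Finset (Option (Fin (m + 1))))}) → X i.1) =>
            if h : ({some 0} : Finset (Option (Fin (m + 1)))) ⊆
                ({some 0} : Finset (Option (Fin (m + 1)))) then
              P₂ l (fun i => a' ⟨i.1, fun hm => i.2 (h hm)⟩)
                   (fun i => x' ⟨i.1, fun hm => i.2 (h hm)⟩) else 0)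
          = P₂ l := by
        funext a' x'
        rw [dif_pos (Finset.Subset.refl _)]
      have hbijΦ : Function.Bijective (fun (a' : (i : {i : Option (Fin (m + 1)) //
            i ∈ ({some 0} : Finset (Option (Fin (m + 1))))}) → A i.1) =>
            a' ⟨some 0, Finset.mem_singleton_self _⟩) := by
        constructor
        · intro a' b' hab
          funext i
          have hi : i = ⟨some 0, Finset.mem_singleton_self _⟩ := Subsingleton.elim _ _
          rw [hi]
          exact hab
        · intro b
          refine ⟨fun i => cast (congrArg A (Finset.mem_singleton.mp i.2)).symm b, ?_⟩
          exact cast_eq _ _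
      have hP₁dist : IsDist (fun (a' : (i : {i : Option (Fin (m + 1)) //
              i ∈ ({some 0} : Finset (Option (Fin (m + 1))))}) → A i.1)
            (x' : (i : {i : Option (Fin (m + 1)) //
              i ∈ ({some 0} : Finset (Option (Fin (m + 1))))}) → X i.1) =>
            P₁ l (x' ⟨some 0, Finset.mem_singleton_self _⟩)
              (a' ⟨some 0, Finset.mem_singleton_self _⟩)) := by
        constructor
        · intro a' x'
          exact (hP₁ l _).1 _
        · intro x'
          exact (Fintype.sum_bijective _ hbijΦ _ _ (fun a' => rfl)).trans ((hP₁ l _).2)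
      refine ⟨⟨some 0, Finset.mem_singleton_self _⟩, ?_, ?_, ?_, ?_, ?_⟩
      · intro hu
        have hn : (none : Option (Fin (m + 1))) ∈
            ({some 0} : Finset (Option (Fin (m + 1)))) := by
          rw [hu]; exact Finset.mem_univ _
        simp at hn
      · rw [heq1]
        exact hP₁dist
      · rw [heq2]
        exact (hP₂ l).1
      · rw [heq1]
        exact nonSignalling_of_subsingleton hP₁dist
      · rw [heq2]
        exact (hP₂ l).2
    · intro a x
      rw [hborn a x]
      rw [Fintype.sum_eq_single ({some 0} : Finset (Option (Fin (m + 1))))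
        (fun M hM => by simp [if_neg hM])]
      refine Finset.sum_congr rfl fun l _ => ?_
      dsimp only
      rw [if_pos rfl, dif_pos (Finset.mem_singleton_self (some 0)),
        dif_pos (Finset.Subset.refl ({some 0} : Finset (Option (Fin (m + 1)))))]
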